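/- The set of linear orders on {1,...,n} that, for every triple i < j < k, never place j in last position among {i,j,k} (i.e., satisfy the never condition 2N3 on every triple) is a Condorcet domain of size exactly 2^{n−1}, and it equals Black's single-peaked domain with respect to the axis 1 < 2 < ... < n. -/

import Mathlib

/-- The majority relation of a profile `P` of `k` voters: `a` beats `b` if more voters
rank `a` above `b` than rank `b` above `a`. -/
def Maj {α : Type*} {k : ℕ} (P : Fin k → α → α → Prop) (a b : α) : Prop :=
  Nat.card {i : Fin k // P i a b} > Nat.card {i : Fin k // P i b a}

/-- `D` is a Condorcet domain: a set of linear orders (strict total orders) on the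
alternatives such that every profile with an odd number of voters drawn from `D`
has a transitive majority relation. -/
def IsCondorcetDomain {α : Type*} (D : Set (α → α → Prop)) : Prop :=
  (∀ r ∈ D, IsStrictTotalOrder α r) ∧
  ∀ (k : ℕ), Odd k → ∀ P : Fin k → α → α → Prop,
    (∀ i, P i ∈ D) → Transitive (Maj P)

/-- A linear order on `Fin n` is single-peaked with respect to the axis
`0 < 1 < ⋯ < n-1` if there is a peak `p` such that among alternatives on the same
side of `p`, the one closer to `p` is preferred. -/
def SinglePeaked {n : ℕ} (r : Fin n → Fin n → Prop) : Prop :=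
  IsStrictTotalOrder (Fin n) r ∧
  ∃ p : Fin n, (∀ i j : Fin n, i < j → j ≤ p → r j i) ∧
    (∀ i j : Fin n, p ≤ i → i < j → r i j)

/-! ### Auxiliary lemmas -/

lemma mkSTO {α : Type*} {r : α → α → Prop}
    (ht : ∀ a b : α, r a b ∨ a = b ∨ r b a) (hi : ∀ a, ¬ r a a)
    (htr : ∀ a b c, r a b → r b c → r a c) : IsStrictTotalOrder α r :=
  { trichotomous := fun a b h1 h2 => by rcases ht a b with h | h | h <;> tauto,
    irrefl := hi, trans := htr }

lemma sto_asymm {α : Type*} {r : α → α → Prop} (h : IsStrictTotalOrder α r) {a b : α}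
    (hab : r a b) : ¬ r b a := fun hba => (h.irrefl a) (h.trans _ _ _ hab hba)

lemma sto_total {α : Type*} {r : α → α → Prop} (h : IsStrictTotalOrder α r) {a b : α}
    (hne : a ≠ b) (h1 : ¬ r a b) : r b a := by
  rcases (haveI := h; trichotomous (r := r) a b) with h' | h' | h'
  · exact absurd h' h1
  · exact absurd h' hne
  · exact h'

lemma exists_worst {α : Type*} [Finite α] [Nonempty α] {r : α → α → Prop}
    (h : IsStrictTotalOrder α r) : ∃ w, ∀ y, y ≠ w → r y w := by
  haveI : IsTrans α (Function.swap r) := ⟨fun a b c h1 h2 => h.trans _ _ _ h2 h1⟩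
  haveI : IsIrrefl α (Function.swap r) := ⟨fun a ha => h.irrefl a ha⟩
  obtain ⟨w, -, hw⟩ := (Finite.wellFounded_of_trans_of_irrefl (Function.swap r)).has_min
    Set.univ ⟨Classical.arbitrary α, trivial⟩
  exact ⟨w, fun y hy => sto_total h (Ne.symm hy) (hw y trivial)⟩

lemma exists_best {α : Type*} [Finite α] [Nonempty α] {r : α → α → Prop}
    (h : IsStrictTotalOrder α r) : ∃ p, ∀ y, y ≠ p → r p y := by
  haveI : IsTrans α r := ⟨h.trans⟩
  haveI : IsIrrefl α r := ⟨h.irrefl⟩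
  obtain ⟨p, -, hp⟩ := (Finite.wellFounded_of_trans_of_irrefl r).has_min
    Set.univ ⟨Classical.arbitrary α, trivial⟩
  exact ⟨p, fun y hy => sto_total h hy (hp y trivial)⟩

lemma card_subtype_add {k : ℕ} {p q : Fin k → Prop} (hpq : ∀ i, q i ↔ ¬ p i) :
    Nat.card {i // p i} + Nat.card {i // q i} = k := by
  classical
  simp only [Nat.card_eq_fintype_card, Fintype.card_subtype]
  rw [Finset.filter_congr (fun i _ => (hpq i))]
  rw [Finset.card_filter_add_card_filter_not (p := p)]
  simp

lemma card_subtype_mono {k : ℕ} {p q : Fin k → Prop} (h : ∀ i, p i → q i) :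
    Nat.card {i // p i} ≤ Nat.card {i // q i} := by
  classical
  simp only [Nat.card_eq_fintype_card, Fintype.card_subtype]
  exact Finset.card_le_card (fun i hi => by
    simp only [Finset.mem_filter] at *
    exact ⟨hi.1, h i hi.2⟩)

/-! ### Part 1: Condorcet domain -/

lemma core_cycle {α : Type*} {k : ℕ} {P : Fin k → α → α → Prop}
    (hP : ∀ i, IsStrictTotalOrder α (P i)) {x y z : α}
    (hxz : x ≠ z) (hyz : y ≠ z)
    (hnm : ∀ i, ¬ (P i x y ∧ P i z y))
    (h1 : Maj P x y) (h2 : Maj P z x) : False := by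
  have hxy : x ≠ y := by rintro rfl; exact lt_irrefl _ h1
  have hsub : ∀ i, P i x y → P i x z := by
    intro i hi
    have hzy : ¬ P i z y := fun hz => hnm i ⟨hi, hz⟩
    exact (hP i).trans _ _ _ hi (sto_total (hP i) (Ne.symm hyz) hzy)
  have m1 : Nat.card {i // P i x y} ≤ Nat.card {i // P i x z} := card_subtype_mono hsub
  have e1 : Nat.card {i // P i x y} + Nat.card {i // P i y x} = k :=
    card_subtype_add (fun i => ⟨fun h1' h2' => sto_asymm (hP i) h2' h1',
      fun h' => sto_total (hP i) hxy h'⟩)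
  have e2 : Nat.card {i // P i z x} + Nat.card {i // P i x z} = k :=
    card_subtype_add (fun i => ⟨fun h1' h2' => sto_asymm (hP i) h2' h1',
      fun h' => sto_total (hP i) (Ne.symm hxz) h'⟩)
  simp only [Maj] at h1 h2
  omega

lemma maj_total {α : Type*} {k : ℕ} (hk : Odd k) {P : Fin k → α → α → Prop}
    (hP : ∀ i, IsStrictTotalOrder α (P i)) {a b : α} (hab : a ≠ b)
    (h : ¬ Maj P a b) : Maj P b a := by
  have e := card_subtype_add (p := fun i => P i a b) (q := fun i => P i b a)
    (fun i => ⟨fun h1' h2' => sto_asymm (hP i) h2' h1', fun h' => sto_total (hP i) hab h'⟩)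
  simp only [Maj] at *
  obtain ⟨t, rfl⟩ := hk
  omega

lemma condorcet (n : ℕ) : IsCondorcetDomain {r : Fin n → Fin n → Prop |
    IsStrictTotalOrder (Fin n) r ∧
    ∀ i j k : Fin n, i < j → j < k → ¬ (r i j ∧ r k j)} := by
  constructor
  · exact fun r hr => hr.1
  · intro k hk P hP a b c hab hbc
    have hPsto : ∀ i, IsStrictTotalOrder (Fin n) (P i) := fun i => (hP i).1
    have hcond : ∀ (i : Fin k) (u v w : Fin n), u < v → v < w → ¬ (P i u v ∧ P i w v) :=
      fun i => (hP i).2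
    have hab' : a ≠ b := by rintro rfl; exact lt_irrefl _ hab
    have hbc' : b ≠ c := by rintro rfl; exact lt_irrefl _ hbc
    have hac' : a ≠ c := by
      rintro rfl
      simp only [Maj] at hab hbc
      omega
    by_contra hac
    have hca : Maj P c a := maj_total hk hPsto hac' hac
    rcases lt_trichotomy a b with h1 | h1 | h1
    · rcases lt_trichotomy b c with h2 | h2 | h2
      · exact core_cycle hPsto hac' hbc' (fun i => hcond i a b c h1 h2) hab hca
      · exact hbc' h2
      · rcases lt_trichotomy a c with h3 | h3 | h3
        · exact core_cycle hPsto (Ne.symm hab') (Ne.symm hac')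
            (fun i hh => hcond i a c b h3 h2 ⟨hh.2, hh.1⟩) hbc hab
        · exact hac' h3
        · exact core_cycle hPsto (Ne.symm hbc') hab'
            (fun i => hcond i c a b h3 h1) hca hbc
    · exact hab' h1
    · rcases lt_trichotomy b c with h2 | h2 | h2
      · rcases lt_trichotomy a c with h3 | h3 | h3
        · exact core_cycle hPsto (Ne.symm hbc') hab'
            (fun i hh => hcond i b a c h1 h3 ⟨hh.2, hh.1⟩) hca hbc
        · exact hac' h3
        · exact core_cycle hPsto (Ne.symm hab') (Ne.symm hac')
            (fun i => hcond i b c a h2 h3) hbc hab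
      · exact hbc' h2
      · exact core_cycle hPsto hac' hbc'
          (fun i hh => hcond i c b a h2 h1 ⟨hh.2, hh.1⟩) hab hca

/-! ### Part 2: counting -/

/-- The domain of never-middle-bottom orders. -/
def Dset (n : ℕ) : Set (Fin n → Fin n → Prop) :=
  {r | IsStrictTotalOrder (Fin n) r ∧
    ∀ i j k : Fin n, i < j → j < k → ¬ (r i j ∧ r k j)}

section Ext

variable {m : ℕ} (e : Fin (m + 1) → Fin (m + 2)) (w : Fin (m + 2))

/-- restriction of an order along `e`. -/
def restr (r : Fin (m + 2) → Fin (m + 2) → Prop) : Fin (m + 1) → Fin (m + 1) → Prop :=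
  fun x y => r (e x) (e y)

/-- extension of an order by a new worst element `w`. -/
def extWorst (s : Fin (m + 1) → Fin (m + 1) → Prop) : Fin (m + 2) → Fin (m + 2) → Prop :=
  fun x y => (y = w ∧ x ≠ w) ∨ ∃ x' y', e x' = x ∧ e y' = y ∧ s x' y'

/-- the set of orders in the domain whose worst element is `w`. -/
def Aset : Set (Fin (m + 2) → Fin (m + 2) → Prop) :=
  {r | r ∈ Dset (m + 2) ∧ ∀ y, y ≠ w → r y w}

variable (hmono : StrictMono e) (hne : ∀ x, e x ≠ w)
  (hrange : ∀ x, x ≠ w → ∃ x', e x' = x)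
  (hend : ∀ u v : Fin (m + 2), u < w → w < v → False)

include hmono in
lemma restr_mem {r : Fin (m + 2) → Fin (m + 2) → Prop} (hr : r ∈ Dset (m + 2)) :
    restr e r ∈ Dset (m + 1) := by
  obtain ⟨hsto, h23⟩ := hr
  refine ⟨mkSTO ?_ ?_ ?_, ?_⟩
  · intro a b
    rcases (haveI := hsto; trichotomous (r := r) (e a) (e b)) with h | h | h
    · exact Or.inl h
    · exact Or.inr (Or.inl (hmono.injective h))
    · exact Or.inr (Or.inr h)
  · exact fun a => hsto.irrefl (e a)
  · exact fun a b c h1 h2 => hsto.trans _ _ _ h1 h2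
  · intro i j k hij hjk
    exact h23 (e i) (e j) (e k) (hmono hij) (hmono hjk)

include hrange in
lemma injOn_restr : Set.InjOn (restr e) (Aset w) := by
  rintro r ⟨⟨hsto, -⟩, hw⟩ r' ⟨⟨hsto', -⟩, hw'⟩ heq
  funext x y
  rcases eq_or_ne x y with rfl | hxy
  · exact propext ⟨fun h => absurd h (hsto.irrefl x), fun h => absurd h (hsto'.irrefl x)⟩
  rcases eq_or_ne y w with rfl | hyw
  · exact propext ⟨fun _ => hw' x hxy, fun _ => hw x hxy⟩
  rcases eq_or_ne x w with rfl | hxw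
  · exact propext ⟨fun h => absurd (hw y hyw) (sto_asymm hsto h),
      fun h => absurd (hw' y hyw) (sto_asymm hsto' h)⟩
  · obtain ⟨x', rfl⟩ := hrange x hxw
    obtain ⟨y', rfl⟩ := hrange y hyw
    exact congrFun (congrFun heq x') y'

end Ext

section Ext2

variable {m : ℕ} {e : Fin (m + 1) → Fin (m + 2)} {w : Fin (m + 2)}
  (hmono : StrictMono e) (hne : ∀ x, e x ≠ w)
  (hrange : ∀ x, x ≠ w → ∃ x', e x' = x)
  (hend : ∀ u v : Fin (m + 2), u < w → w < v → False)

include hmono hne hrange hend in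
lemma extWorst_mem {s : Fin (m + 1) → Fin (m + 1) → Prop} (hs : s ∈ Dset (m + 1)) :
    extWorst e w s ∈ Aset w := by
  obtain ⟨hsto, h23⟩ := hs
  refine ⟨⟨mkSTO ?_ ?_ ?_, ?_⟩, fun y hy => Or.inl ⟨rfl, hy⟩⟩
  · intro a b
    rcases eq_or_ne a b with rfl | hab
    · exact Or.inr (Or.inl rfl)
    rcases eq_or_ne b w with rfl | hbw
    · exact Or.inl (Or.inl ⟨rfl, hab⟩)
    rcases eq_or_ne a w with rfl | haw
    · exact Or.inr (Or.inr (Or.inl ⟨rfl, hbw⟩))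
    · obtain ⟨a', rfl⟩ := hrange a haw
      obtain ⟨b', rfl⟩ := hrange b hbw
      rcases (haveI := hsto; trichotomous (r := s) a' b') with h | h | h
      · exact Or.inl (Or.inr ⟨a', b', rfl, rfl, h⟩)
      · exact Or.inr (Or.inl (by rw [h]))
      · exact Or.inr (Or.inr (Or.inr ⟨b', a', rfl, rfl, h⟩))
  · rintro a (⟨rfl, ha⟩ | ⟨x', y', hx, hy, hs'⟩)
    · exact ha rfl
    · obtain rfl := hmono.injective (hx.trans hy.symm)
      exact hsto.irrefl x' hs'
  · rintro a b c (⟨rfl, ha⟩ | ⟨x', y', hx, hy, hs1⟩) h2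
    · rcases h2 with ⟨rfl, hb⟩ | ⟨u, v, hu, hv, _⟩
      · exact absurd rfl hb
      · exact absurd hu (hne u)
    · rcases h2 with ⟨rfl, hb⟩ | ⟨u, v, hu, hv, hs2⟩
      · exact Or.inl ⟨rfl, hx ▸ hne x'⟩
      · obtain rfl := hmono.injective (hy.trans hu.symm)
        exact Or.inr ⟨x', v, hx, hv, hsto.trans _ _ _ hs1 hs2⟩
  · rintro i j k hij hjk ⟨h1, h2⟩
    rcases h1 with ⟨rfl, -⟩ | ⟨x', y', hx, hy, hs1⟩
    · exact hend i k hij hjk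
    rcases h2 with ⟨rfl, -⟩ | ⟨u, v, hu, hv, hs2⟩
    · exact hend i k hij hjk
    have huv : y' = v := hmono.injective (hy.trans hv.symm)
    subst huv
    refine h23 x' y' u ?_ ?_ ⟨hs1, hs2⟩
    · rw [← hmono.lt_iff_lt, hx, hy]; exact hij
    · rw [← hmono.lt_iff_lt, hy, hu]; exact hjk

include hmono hne in
lemma restr_extWorst (s : Fin (m + 1) → Fin (m + 1) → Prop) :
    restr e (extWorst e w s) = s := by
  funext x y
  refine propext ⟨?_, fun h => Or.inr ⟨x, y, rfl, rfl, h⟩⟩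
  rintro (⟨hw', -⟩ | ⟨x', y', hx, hy, hs'⟩)
  · exact absurd hw' (hne y)
  · rwa [hmono.injective hx, hmono.injective hy] at hs'

include hmono hne hrange hend in
lemma image_restr : restr e '' Aset w = Dset (m + 1) := by
  apply Set.Subset.antisymm
  · rintro _ ⟨r, ⟨hr, -⟩, rfl⟩
    exact restr_mem e hmono hr
  · intro s hs
    exact ⟨extWorst e w s, extWorst_mem hmono hne hrange hend hs, restr_extWorst hmono hne s⟩

include hmono hne hrange hend in
lemma ncard_Aset : (Aset w).ncard = (Dset (m + 1)).ncard := by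
  rw [← image_restr hmono hne hrange hend, Set.ncard_image_of_injOn (injOn_restr e w hrange)]

include hmono hne hrange hend in
lemma finite_Aset (hfin : (Dset (m + 1)).Finite) : (Aset w : Set _).Finite :=
  Set.Finite.of_finite_image (by rwa [image_restr hmono hne hrange hend]) (injOn_restr e w hrange)

end Ext2

lemma Dset_one : Dset 1 = {fun _ _ => False} := by
  ext r
  simp only [Dset, Set.mem_setOf_eq, Set.mem_singleton_iff]
  constructor
  · rintro ⟨hsto, -⟩
    funext x y
    rcases Subsingleton.elim x y
    exact eq_false (hsto.irrefl x)
  · rintro rfl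
    refine ⟨mkSTO ?_ ?_ ?_, ?_⟩
    · intro a b; exact Or.inr (Or.inl (Subsingleton.elim a b))
    · intro a h; exact h
    · intro a b c h; exact h.elim
    · rintro i j k - - ⟨h, -⟩; exact h

lemma cover (m : ℕ) :
    Dset (m + 2) = Aset (0 : Fin (m + 2)) ∪ Aset (Fin.last (m + 1)) := by
  apply Set.Subset.antisymm
  · intro r hr
    obtain ⟨w, hw⟩ := exists_worst hr.1
    rcases eq_or_ne w 0 with rfl | h0
    · exact Or.inl ⟨hr, hw⟩
    rcases eq_or_ne w (Fin.last (m + 1)) with rfl | hl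
    · exact Or.inr ⟨hr, hw⟩
    exact absurd ⟨hw 0 (Ne.symm h0), hw (Fin.last (m + 1)) (Ne.symm hl)⟩
      (hr.2 0 w (Fin.last (m + 1)) (Fin.pos_of_ne_zero h0) (Fin.lt_last_iff_ne_last.2 hl))
  · rintro r (⟨hr, -⟩ | ⟨hr, -⟩) <;> exact hr

lemma disj (m : ℕ) :
    Disjoint (Aset (0 : Fin (m + 2))) (Aset (Fin.last (m + 1))) := by
  rw [Set.disjoint_left]
  rintro r ⟨⟨hsto, -⟩, h0⟩ ⟨-, hl⟩
  have h1 : (0 : Fin (m + 2)) ≠ Fin.last (m + 1) := by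
    simp [Fin.ext_iff]
  exact sto_asymm hsto (h0 (Fin.last (m + 1)) (Ne.symm h1)) (hl 0 h1)

lemma card_Dset (m : ℕ) : Nat.card (Dset (m + 1)) = 2 ^ m := by
  induction m with
  | zero =>
    rw [Dset_one, Nat.card_coe_set_eq, Set.ncard_singleton, pow_zero]
  | succ m ih =>
    have hfin : (Dset (m + 1)).Finite := by
      rw [← Set.finite_coe_iff]
      have hpos : 0 < Nat.card (Dset (m + 1)) := by rw [ih]; positivity
      exact (Nat.card_pos_iff.mp hpos).2
    have h0 : ∀ x : Fin (m + 1), Fin.succ x ≠ (0 : Fin (m + 2)) := fun x => Fin.succ_ne_zero x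
    have hr0 : ∀ x : Fin (m + 2), x ≠ 0 → ∃ x', Fin.succ x' = x :=
      fun x hx => Fin.exists_succ_eq.mpr hx
    have he0 : ∀ u v : Fin (m + 2), u < 0 → (0 : Fin (m + 2)) < v → False :=
      fun u v h _ => Fin.not_lt_zero u h
    have hl : ∀ x : Fin (m + 1), Fin.castSucc x ≠ Fin.last (m + 1) :=
      fun x => (Fin.castSucc_lt_last x).ne
    have hrl : ∀ x : Fin (m + 2), x ≠ Fin.last (m + 1) → ∃ x', Fin.castSucc x' = x :=
      fun x hx => Fin.exists_castSucc_eq.mpr hx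
    have hel : ∀ u v : Fin (m + 2), u < Fin.last (m + 1) → Fin.last (m + 1) < v → False :=
      fun u v _ h => absurd (Fin.le_last v) (not_le.mpr h)
    have cA : (Aset (0 : Fin (m + 2))).ncard = (Dset (m + 1)).ncard :=
      ncard_Aset Fin.strictMono_succ h0 hr0 he0
    have cB : (Aset (Fin.last (m + 1))).ncard = (Dset (m + 1)).ncard :=
      ncard_Aset Fin.strictMono_castSucc hl hrl hel
    have fA : (Aset (0 : Fin (m + 2))).Finite :=
      finite_Aset Fin.strictMono_succ h0 hr0 he0 hfin
    have fB : (Aset (Fin.last (m + 1))).Finite :=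
      finite_Aset Fin.strictMono_castSucc hl hrl hel hfin
    rw [Nat.card_coe_set_eq, cover m, Set.ncard_union_eq (disj m) fA fB, cA, cB,
      ← Nat.card_coe_set_eq, ih, pow_succ]
    ring

/-! ### Part 3: single-peakedness -/

lemma part3 (n : ℕ) (hn : 1 ≤ n) :
    {r : Fin n → Fin n → Prop | IsStrictTotalOrder (Fin n) r ∧
        ∀ i j k : Fin n, i < j → j < k → ¬ (r i j ∧ r k j)} =
      {r : Fin n → Fin n → Prop | SinglePeaked r} := by
  haveI : NeZero n := ⟨by omega⟩
  ext r
  simp only [Set.mem_setOf_eq]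
  constructor
  · rintro ⟨hsto, h23⟩
    refine ⟨hsto, ?_⟩
    obtain ⟨p, hp⟩ := exists_best hsto
    refine ⟨p, ?_, ?_⟩
    · intro i j hij hjp
      by_contra hji
      have hrij : r i j := sto_total hsto (ne_of_lt hij).symm hji
      rcases eq_or_lt_of_le hjp with h | h
      · subst h
        exact sto_asymm hsto (hp i (ne_of_lt hij)) hrij
      · exact h23 i j p hij h ⟨hrij, hp j (ne_of_lt h)⟩
    · intro i j hpi hij
      by_contra hij'
      have hrji : r j i := sto_total hsto (ne_of_lt hij) hij'
      rcases eq_or_lt_of_le hpi with h | h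
      · subst h
        exact sto_asymm hsto (hp j (ne_of_gt hij)) hrji
      · exact h23 p i j h hij ⟨hp i (ne_of_gt h), hrji⟩
  · rintro ⟨hsto, p, hL, hR⟩
    refine ⟨hsto, ?_⟩
    rintro i j k hij hjk ⟨h1, h2⟩
    rcases le_total j p with hjp | hpj
    · exact sto_asymm hsto (hL i j hij hjp) h1
    · exact sto_asymm hsto (hR j k hpj hjk) h2

/-- The set of linear orders on `{1,…,n}` satisfying the never condition `2N3` on
every triple is a Condorcet domain of size exactly `2^{n-1}`, and it equals Black's
single-peaked domain with respect to the axis `1 < 2 < ⋯ < n`. -/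
theorem never_middle_bottom_domain (n : ℕ) (hn : 1 ≤ n) :
    IsCondorcetDomain {r : Fin n → Fin n → Prop |
        IsStrictTotalOrder (Fin n) r ∧
        ∀ i j k : Fin n, i < j → j < k → ¬ (r i j ∧ r k j)} ∧
    Nat.card {r : Fin n → Fin n → Prop |
        IsStrictTotalOrder (Fin n) r ∧
        ∀ i j k : Fin n, i < j → j < k → ¬ (r i j ∧ r k j)} = 2 ^ (n - 1) ∧
    {r : Fin n → Fin n → Prop |
        IsStrictTotalOrder (Fin n) r ∧
        ∀ i j k : Fin n, i < j → j < k → ¬ (r i j ∧ r k j)} =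
      {r : Fin n → Fin n → Prop | SinglePeaked r} := by
  refine ⟨condorcet n, ?_, part3 n hn⟩
  obtain ⟨m, rfl⟩ : ∃ m, n = m + 1 := ⟨n - 1, by omega⟩
  have := card_Dset m
  simpa [Dset] using this
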